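/- arXiv:1806.00882 — 2 statements merged into one kernel-verified Lean document; each statement's English description precedes it below -/
import Mathlib

section
/- Let G be an MVR chain graph on V and let C = {C1,…,CH} be a hypergraph on V such that for every chain component τ of G there is a hyperedge C_h with τ ∪ pa_G(τ) ⊆ C_h. Let Ḡ_V be the undirected graph on V whose edge set is the union over h of the edge sets of the complete graphs on the C_h. Then any junction tree constructed from Ḡ_V (i.e., a junction tree of the cliques of a triangulation of Ḡ_V) is an m-separation tree for G. -/
namespace MVR

universe u v

/-- A mixed graph with directed (`dir u v` means `u → v`) and bidirected
(`bi u v` means `u ↔ v`) edges between distinct vertices. -/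
structure MixedGraph (V : Type u) where
  dir : V → V → Prop
  bi : V → V → Prop
  bi_symm : ∀ ⦃u v : V⦄, bi u v → bi v u
  dir_irrefl : ∀ v : V, ¬ dir v v
  bi_irrefl : ∀ v : V, ¬ bi v v

namespace MixedGraph

variable {V : Type u}

/-- Two vertices are adjacent if they are joined by a directed or bidirected edge. -/
def Adjacent (G : MixedGraph V) (u v : V) : Prop :=
  G.dir u v ∨ G.dir v u ∨ G.bi u v

/-- `u` is an ancestor of `v`: there is a directed path `u → ⋯ → v`. -/
def IsAncestor (G : MixedGraph V) (u v : V) : Prop :=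
  Relation.TransGen G.dir u v

/-- `an(X)`: the set of ancestors of vertices in `X`. -/
def anc (G : MixedGraph V) (X : Set V) : Set V :=
  {a | ∃ x ∈ X, G.IsAncestor a x}

/-- `An(X) = an(X) ∪ X`. -/
def Anc (G : MixedGraph V) (X : Set V) : Set V :=
  G.anc X ∪ X

/-- The boundary `bd(u)`: vertices `v` with `v → u` or `v ↔ u`. -/
def bd (G : MixedGraph V) (u : V) : Set V :=
  {v | G.dir v u ∨ G.bi v u}

/-- A partially directed cycle: distinct vertices `f 0, …, f (n-1)` (`n ≥ 3`), read
cyclically, every consecutive pair joined by a directed or bidirected edge, with at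
least one directed edge. -/
def IsPartiallyDirectedCycle (G : MixedGraph V) (n : ℕ) (f : ℕ → V) : Prop :=
  3 ≤ n ∧ (∀ i < n, ∀ j < n, f i = f j → i = j) ∧
  (∀ i < n, G.dir (f i) (f ((i + 1) % n)) ∨ G.bi (f i) (f ((i + 1) % n))) ∧
  (∃ i < n, G.dir (f i) (f ((i + 1) % n)))

/-- An MVR chain graph is a mixed graph with no partially directed cycles. -/
def IsMVRChainGraph (G : MixedGraph V) : Prop :=
  ∀ (n : ℕ) (f : ℕ → V), ¬ G.IsPartiallyDirectedCycle n f

/-- A chain (mixed walk) in a mixed graph: each step uses `a → b`, `a ← b` or `a ↔ b`. -/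
inductive Chain (G : MixedGraph V) : V → V → Type u
  | nil (a : V) : Chain G a a
  | fwd {a b c : V} (h : G.dir a b) (p : Chain G b c) : Chain G a c
  | rev {a b c : V} (h : G.dir b a) (p : Chain G b c) : Chain G a c
  | bid {a b c : V} (h : G.bi a b) (p : Chain G b c) : Chain G a c

variable {G : MixedGraph V}

/-- The list of vertices of a chain. -/
def Chain.support {a b : V} (p : G.Chain a b) : List V :=
  match p with
  | .nil _ => [a]
  | .fwd _ q => a :: q.support
  | .rev _ q => a :: q.support
  | .bid _ q => a :: q.support

/-- For each edge of the chain its pair of arrowhead marks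
`(arrowhead at left endpoint, arrowhead at right endpoint)`. -/
def Chain.marks {a b : V} (p : G.Chain a b) : List (Bool × Bool) :=
  match p with
  | .nil _ => []
  | .fwd _ q => (false, true) :: q.marks
  | .rev _ q => (true, false) :: q.marks
  | .bid _ q => (true, true) :: q.marks

/-- The internal vertex lying between edges `i` and `i+1` of the chain (i.e. the vertex
at position `i+1` of the support) is a collider: both incident edges have an arrowhead
at it. -/
def Chain.ColliderAt {a b : V} (p : G.Chain a b) (i : ℕ) : Prop :=
  ∃ m₁ m₂ : Bool × Bool, p.marks[i]? = some m₁ ∧ p.marks[i + 1]? = some m₂ ∧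
    m₁.2 = true ∧ m₂.1 = true

/-- A chain is m-connecting given `Z` if every internal noncollider is not in `Z` and
every internal collider is in `An(Z)`. -/
def Chain.MConnecting {a b : V} (p : G.Chain a b) (Z : Set V) : Prop :=
  ∀ (i : ℕ) (w : V), p.support[i + 1]? = some w → i + 2 < p.support.length →
    (p.ColliderAt i → w ∈ G.Anc Z) ∧ (¬ p.ColliderAt i → w ∉ Z)

/-- A chain is blocked by `Z` if it is not m-connecting given `Z`. -/
def Chain.Blocked {a b : V} (p : G.Chain a b) (Z : Set V) : Prop :=
  ¬ p.MConnecting Z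

/-- Vertices `u` and `v` are m-separated by `Z`: every chain (sequence of distinct
vertices) between them is blocked by `Z`. -/
def MSeparated (G : MixedGraph V) (u v : V) (Z : Set V) : Prop :=
  ∀ p : G.Chain u v, p.support.Nodup → p.Blocked Z

/-- Sets `X` and `Y` are m-separated by `Z`. -/
def MSeparatedSets (G : MixedGraph V) (X Y Z : Set V) : Prop :=
  ∀ u ∈ X, ∀ v ∈ Y, G.MSeparated u v Z

/-- The undirected graph on `V` whose edges are the bidirected edges of `G`. -/
def biGraph (G : MixedGraph V) : SimpleGraph V where
  Adj a b := G.bi a b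
  symm := ⟨fun _ _ h => G.bi_symm h⟩
  loopless := ⟨fun a h => G.bi_irrefl a h⟩

/-- `τ` is a chain component of `G`: a connected component of the bidirected part. -/
def IsChainComponent (G : MixedGraph V) (τ : Set V) : Prop :=
  ∃ a : V, τ = {w | G.biGraph.Reachable a w}

/-- The parent set `pa_G(τ)` of a set of vertices `τ`. -/
def paSet (G : MixedGraph V) (τ : Set V) : Set V :=
  {a | a ∉ τ ∧ ∃ w ∈ τ, G.dir a w}

/-- `u` and `v` are collider connected: there is a chain (with distinct vertices)
from `u` to `v` on which every nonendpoint vertex is a collider. -/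
def ColliderConnected (G : MixedGraph V) (u v : V) : Prop :=
  ∃ p : G.Chain u v, p.support.Nodup ∧
    ∀ i : ℕ, i + 2 < p.support.length → p.ColliderAt i

/-- `T` with node-sets `C` is an m-separation tree for `G`: `T` is a tree, the nodes
cover `V`, and for every edge `(i, j)` of `T`, with separator `S = C i ∩ C j` and
`V₁`, `V₂` the unions of the node sets of the two subtrees obtained by deleting the
edge, the sets `V₁ \ S` and `V₂ \ S` are m-separated by `S` in `G`. -/
def IsMSepTree (G : MixedGraph V) {ι : Type v} (T : SimpleGraph ι) (C : ι → Set V) :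
    Prop :=
  T.IsTree ∧ (⋃ i, C i) = Set.univ ∧
  ∀ i j : ι, T.Adj i j →
    G.MSeparatedSets
      ((⋃ k ∈ {k : ι | (T.deleteEdges {s(i, j)}).Reachable i k}, C k) \ (C i ∩ C j))
      ((⋃ k ∈ {k : ι | (T.deleteEdges {s(i, j)}).Reachable j k}, C k) \ (C i ∩ C j))
      (C i ∩ C j)

end MixedGraph

/-- An undirected graph is triangulated (chordal) if every cycle of length at least 4
has a chord. -/
def IsChordal {W : Type u} (H : SimpleGraph W) : Prop :=
  ∀ (a : W) (c : H.Walk a a), c.IsCycle → 4 ≤ c.length →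
    ∃ x y : W, x ∈ c.support ∧ y ∈ c.support ∧ H.Adj x y ∧ s(x, y) ∉ c.edges

/-- `s` is a maximal clique of `H`. -/
def IsMaxClique {W : Type u} (H : SimpleGraph W) (s : Set W) : Prop :=
  H.IsClique s ∧ ∀ t : Set W, H.IsClique t → s ⊆ t → t = s

/-- `(T, C)` is a junction tree constructed from the undirected graph `H`:
`T` is a tree whose nodes `C i` are exactly the (maximal) cliques of some triangulated
supergraph `Ht` of `H`, satisfying the junction property. -/
def IsJunctionTreeFor {W : Type u} {ι : Type v} (T : SimpleGraph ι) (C : ι → Set W)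
    (H : SimpleGraph W) : Prop :=
  T.IsTree ∧
  ∃ Ht : SimpleGraph W, H ≤ Ht ∧ IsChordal Ht ∧
    Function.Injective C ∧
    (∀ i : ι, IsMaxClique Ht (C i)) ∧
    (∀ s : Set W, IsMaxClique Ht s → ∃ i : ι, C i = s) ∧
    (∀ (i j : ι) (p : T.Walk i j), p.IsPath → ∀ k ∈ p.support, C i ∩ C j ⊆ C k)

/-- In an undirected graph `H`, `Z` separates `X` and `Y`: every path between a vertex
of `X` and a vertex of `Y` passes through `Z`. -/
def USeparates {W : Type u} (H : SimpleGraph W) (X Y Z : Set W) : Prop :=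
  ∀ u ∈ X, ∀ v ∈ Y, ∀ p : H.Walk u v, p.IsPath → ∃ z ∈ Z, z ∈ p.support

/-- `H` is an undirected independence graph (UIG) for the mixed graph `G`: whenever a
set `Z` separates (nonempty, pairwise disjoint) `X` and `Y` in `H`, `Z` m-separates
`X` and `Y` in `G`. -/
def IsUIG {W : Type u} (H : SimpleGraph W) (G : MixedGraph W) : Prop :=
  ∀ X Y Z : Set W, X.Nonempty → Y.Nonempty → Disjoint X Y → Disjoint X Z →
    Disjoint Y Z → USeparates H X Y Z → G.MSeparatedSets X Y Z

end MVR

namespace MVR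

namespace MixedGraph

variable {V : Type u} {G : MixedGraph V}

lemma Chain.support_head {a b : V} (p : G.Chain a b) : ∃ t, p.support = a :: t := by
  cases p <;> exact ⟨_, rfl⟩

lemma Chain.support_length_pos {a b : V} (p : G.Chain a b) : 0 < p.support.length := by
  obtain ⟨t, ht⟩ := p.support_head; simp [ht]

lemma Chain.eq_of_support_length_le_one {a b : V} (p : G.Chain a b)
    (h : p.support.length ≤ 1) : a = b := by
  cases p with
  | nil => rfl
  | fwd h' q =>
    exact absurd h (by have := q.support_length_pos
                       simp only [Chain.support, List.length_cons]; omega)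
  | rev h' q =>
    exact absurd h (by have := q.support_length_pos
                       simp only [Chain.support, List.length_cons]; omega)
  | bid h' q =>
    exact absurd h (by have := q.support_length_pos
                       simp only [Chain.support, List.length_cons]; omega)

/-- The first edge of the chain has an arrowhead at its first vertex. -/
def Chain.HeadArrow {a b : V} (p : G.Chain a b) : Prop :=
  ∃ m : Bool × Bool, p.marks[0]? = some m ∧ m.1 = true

lemma Chain.colliderAt_zero_iff {a c : V} (p : G.Chain a c) {mL mR : Bool}
    {l : List (Bool × Bool)} (hm : p.marks = (mL, mR) :: l) :
    p.ColliderAt 0 ↔ (mR = true ∧ ∃ m : Bool × Bool, l[0]? = some m ∧ m.1 = true) := by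
  unfold Chain.ColliderAt
  rw [hm]
  constructor
  · rintro ⟨m₁, m₂, h1, h2, h3, h4⟩
    simp only [List.getElem?_cons_zero, Option.some.injEq] at h1
    simp only [List.getElem?_cons_succ] at h2
    rw [← h1] at h3
    exact ⟨h3, m₂, h2, h4⟩
  · rintro ⟨hmR, m, hm0, hm1⟩
    exact ⟨(mL, mR), m, by simp, by simpa using hm0, hmR, hm1⟩

lemma Chain.colliderAt_succ_iff {a b' c : V} (p : G.Chain a c) (q : G.Chain b' c)
    {m0 : Bool × Bool} (hm : p.marks = m0 :: q.marks) (i : ℕ) :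
    p.ColliderAt (i + 1) ↔ q.ColliderAt i := by
  unfold Chain.ColliderAt
  rw [hm]
  simp only [List.getElem?_cons_succ]

/-- The "noncollider" half of m-connection: every internal noncollider avoids `S`. -/
def Chain.NCond {a b : V} (p : G.Chain a b) (S : Set V) : Prop :=
  ∀ (i : ℕ) (w : V), p.support[i + 1]? = some w → i + 2 < p.support.length →
    ¬ p.ColliderAt i → w ∉ S

lemma Chain.NCond.tail {a b' c : V} {p : G.Chain a c} {q : G.Chain b' c} {S : Set V}
    (hs : p.support = a :: q.support) {m0 : Bool × Bool} (hm : p.marks = m0 :: q.marks)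
    (h : p.NCond S) : q.NCond S := by
  intro i w h1 h2 h3
  apply h (i + 1) w
  · rw [hs]; simpa using h1
  · rw [hs]; simp only [List.length_cons]; omega
  · rw [Chain.colliderAt_succ_iff p q hm i]; exact h3

lemma head_not_in {S : Set V} {b c v : V} (hv : v ∉ S) (q : G.Chain b v) (q' : G.Chain c v)
    (hs : q.support = b :: q'.support) (hcond : q.NCond S) (hnc : ¬ q.ColliderAt 0) :
    c ∉ S := by
  by_cases hlen : q'.support.length ≤ 1
  · have hcv := q'.eq_of_support_length_le_one hlen
    rw [hcv]; exact hv
  · apply hcond 0 c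
    · rw [hs]; obtain ⟨t, ht⟩ := q'.support_head; rw [ht]; simp
    · rw [hs]; simp only [List.length_cons]; omega
    · exact hnc

/-- The chain component of a vertex. -/
def comp (G : MixedGraph V) (b : V) : Set V := {w | G.biGraph.Reachable b w}

/-- A chain component together with its parents. -/
def compPa (G : MixedGraph V) (b : V) : Set V := G.comp b ∪ G.paSet (G.comp b)

lemma comp_isChainComponent (G : MixedGraph V) (b : V) : G.IsChainComponent (G.comp b) :=
  ⟨b, rfl⟩

lemma self_mem_comp (G : MixedGraph V) (b : V) : b ∈ G.comp b :=
  SimpleGraph.Reachable.refl b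

lemma mem_compPa_self (G : MixedGraph V) (b : V) : b ∈ G.compPa b :=
  Or.inl (G.self_mem_comp b)

lemma mem_compPa_of_dir {a b : V} (h : G.dir a b) : a ∈ G.compPa b := by
  by_cases ha : a ∈ G.comp b
  · exact Or.inl ha
  · exact Or.inr ⟨ha, b, G.self_mem_comp b, h⟩

lemma mem_comp_of_bi {a b : V} (h : G.bi b a) : a ∈ G.comp b :=
  SimpleGraph.Adj.reachable (show G.biGraph.Adj b a from h)

lemma comp_eq_of_bi {b c : V} (h : G.bi b c) : G.comp b = G.comp c := by
  ext w
  constructor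
  · intro hw
    exact (SimpleGraph.Adj.reachable (show G.biGraph.Adj c b from G.bi_symm h)).trans hw
  · intro hw
    exact (SimpleGraph.Adj.reachable (show G.biGraph.Adj b c from h)).trans hw

lemma compPa_eq_of_bi {b c : V} (h : G.bi b c) : G.compPa b = G.compPa c := by
  unfold compPa
  rw [comp_eq_of_bi h]

end MixedGraph

/-- The subgraph of `H` using only vertices outside `S`. -/
def avoidGraph {V : Type u} (H : SimpleGraph V) (S : Set V) : SimpleGraph V where
  Adj x y := H.Adj x y ∧ x ∉ S ∧ y ∉ S
  symm := ⟨fun _ _ ⟨h, hx, hy⟩ => ⟨h.symm, hy, hx⟩⟩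
  loopless := ⟨fun x ⟨h, _, _⟩ => H.loopless.irrefl x h⟩

@[simp] lemma avoidGraph_adj {V : Type u} {H : SimpleGraph V} {S : Set V} {x y : V} :
    (avoidGraph H S).Adj x y ↔ H.Adj x y ∧ x ∉ S ∧ y ∉ S := Iff.rfl

open MixedGraph in
/-- Key lemma: an m-connecting chain yields a walk in the augmented graph avoiding `S`. -/
lemma key_reach {V : Type} {ι : Type} (G : MixedGraph V) (C : ι → Set V)
    (hpar : ∀ τ : Set V, G.IsChainComponent τ → ∃ h : ι, τ ∪ G.paSet τ ⊆ C h)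
    (H : SimpleGraph V) (hH : ∀ u v : V, H.Adj u v ↔ u ≠ v ∧ ∃ h : ι, u ∈ C h ∧ v ∈ C h)
    (S : Set V) (u : V) :
    ∀ {b v : V} (q : G.Chain b v), v ∉ S → q.NCond S →
      ∀ (inc : Bool) (a : V), (avoidGraph H S).Reachable u a → a ∉ S →
      (a = b ∨ (inc = true ∧ a ∈ G.compPa b)) →
      ((inc = true ∧ q.HeadArrow) ∨ b ∉ S) →
      (avoidGraph H S).Reachable u v := by
  have hedge : ∀ b : V, ∃ h : ι, G.compPa b ⊆ C h :=
    fun b => hpar (G.comp b) (G.comp_isChainComponent b)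
  have hadjS : ∀ b x y : V, x ∈ G.compPa b → y ∈ G.compPa b → x ≠ y → x ∉ S → y ∉ S →
      (avoidGraph H S).Adj x y := by
    intro b x y hx hy hne hxS hyS
    obtain ⟨h, hsub⟩ := hedge b
    exact ⟨(hH x y).mpr ⟨hne, h, hsub hx, hsub hy⟩, hxS, hyS⟩
  intro b v q
  induction q with
  | nil d =>
    intro hv hcond inc a hra haS hstate _
    rcases hstate with rfl | ⟨hinc, hmem⟩
    · exact hra
    · by_cases hav : a = d
      · exact hav ▸ hra
      · exact hra.trans (hadjS d a d hmem (G.mem_compPa_self d) hav haS hv).reachable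
  | @fwd b c v hdir q' ih =>
    intro hv hcond inc a hra haS hstate hHB
    have hsup : (Chain.fwd hdir q').support = b :: q'.support := rfl
    have hmk : (Chain.fwd hdir q').marks = (false, true) :: q'.marks := rfl
    have hbS : b ∉ S := by
      rcases hHB with ⟨_, m, hm, hm1⟩ | h
      · exfalso
        rw [hmk] at hm
        simp only [List.getElem?_cons_zero, Option.some.injEq] at hm
        rw [← hm] at hm1
        simp at hm1
      · exact h
    have hrb : (avoidGraph H S).Reachable u b := by
      rcases hstate with rfl | ⟨_, hmem⟩
      · exact hra
      · by_cases hab : a = b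
        · exact hab ▸ hra
        · exact hra.trans (hadjS b a b hmem (G.mem_compPa_self b) hab haS hbS).reachable
    have hcond' : q'.NCond S := hcond.tail hsup hmk
    have hHB' : (true = true ∧ q'.HeadArrow) ∨ c ∉ S := by
      by_cases hha : q'.HeadArrow
      · exact Or.inl ⟨rfl, hha⟩
      · refine Or.inr (head_not_in hv (Chain.fwd hdir q') q' hsup hcond ?_)
        rw [Chain.colliderAt_zero_iff _ hmk]
        rintro ⟨-, hm⟩
        exact hha hm
    exact ih hv hcond' true b hrb hbS (Or.inr ⟨rfl, mem_compPa_of_dir hdir⟩) hHB'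
  | @rev b c v hdir q' ih =>
    intro hv hcond inc a hra haS hstate hHB
    have hsup : (Chain.rev hdir q').support = b :: q'.support := rfl
    have hmk : (Chain.rev hdir q').marks = (true, false) :: q'.marks := rfl
    have hcS : c ∉ S := by
      refine head_not_in hv (Chain.rev hdir q') q' hsup hcond ?_
      rw [Chain.colliderAt_zero_iff _ hmk]
      rintro ⟨h, -⟩
      exact absurd h (by simp)
    have hamem : a ∈ G.compPa b := by
      rcases hstate with rfl | ⟨_, hmem⟩
      · exact G.mem_compPa_self a
      · exact hmem
    have hrc : (avoidGraph H S).Reachable u c := by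
      by_cases hac : a = c
      · exact hac ▸ hra
      · exact hra.trans (hadjS b a c hamem (mem_compPa_of_dir hdir) hac haS hcS).reachable
    exact ih hv (hcond.tail hsup hmk) false c hrc hcS (Or.inl rfl) (Or.inr hcS)
  | @bid b c v hbi q' ih =>
    intro hv hcond inc a hra haS hstate hHB
    have hsup : (Chain.bid hbi q').support = b :: q'.support := rfl
    have hmk : (Chain.bid hbi q').marks = (true, true) :: q'.marks := rfl
    have hHB' : (true = true ∧ q'.HeadArrow) ∨ c ∉ S := by
      by_cases hha : q'.HeadArrow
      · exact Or.inl ⟨rfl, hha⟩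
      · refine Or.inr (head_not_in hv (Chain.bid hbi q') q' hsup hcond ?_)
        rw [Chain.colliderAt_zero_iff _ hmk]
        rintro ⟨-, hm⟩
        exact hha hm
    have hcond' : q'.NCond S := hcond.tail hsup hmk
    by_cases hbS : b ∈ S
    · have hmem : a ∈ G.compPa b := by
        rcases hstate with rfl | ⟨_, hmem⟩
        · exact absurd hbS haS
        · exact hmem
      have hmem' : a ∈ G.compPa c := (compPa_eq_of_bi hbi) ▸ hmem
      exact ih hv hcond' true a hra haS (Or.inr ⟨rfl, hmem'⟩) hHB'
    · have hrb : (avoidGraph H S).Reachable u b := by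
        rcases hstate with rfl | ⟨_, hmem⟩
        · exact hra
        · by_cases hab : a = b
          · exact hab ▸ hra
          · exact hra.trans (hadjS b a b hmem (G.mem_compPa_self b) hab haS hbS).reachable
      have hbc : b ∈ G.compPa c := Or.inl (mem_comp_of_bi (G.bi_symm hbi))
      exact ih hv hcond' true b hrb hbS (Or.inr ⟨rfl, hbc⟩) hHB'

end MVR

/-- Let `C` be a hypergraph on `V` such that every chain component `τ` of
the MVR chain graph `G` together with `pa_G(τ)` is contained in some hyperedge, and let
`H = Ḡ_V` be the union of the complete graphs on the hyperedges.  Then any junction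
tree constructed from `H` is an m-separation tree for `G`. -/
theorem MVR.junctionTree_of_hypergraph_isMSepTree
    {V : Type} [Fintype V] {ι : Type} [Fintype ι]
    (G : MVR.MixedGraph V) (hG : G.IsMVRChainGraph)
    (C : ι → Set V) (hCne : ∀ h : ι, (C h).Nonempty)
    (hcov : (⋃ h : ι, C h) = Set.univ)
    (hpar : ∀ τ : Set V, G.IsChainComponent τ → ∃ h : ι, τ ∪ G.paSet τ ⊆ C h)
    (H : SimpleGraph V)
    (hH : ∀ u v : V, H.Adj u v ↔ u ≠ v ∧ ∃ h : ι, u ∈ C h ∧ v ∈ C h)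
    {κ : Type} [Fintype κ] (T : SimpleGraph κ) (Cl : κ → Set V)
    (hJT : MVR.IsJunctionTreeFor T Cl H) :
    G.IsMSepTree T Cl := by
  classical
  obtain ⟨hT, Ht, hle, hchord, hinj, hmaxcl, hsurj, hjp⟩ := hJT
  have extend : ∀ s : Set V, Ht.IsClique s → ∃ k : κ, s ⊆ Cl k := by
    intro s hs
    obtain ⟨t, ⟨htc, hst⟩, htmax⟩ := Set.Finite.exists_maximalFor (fun t : Set V => t.ncard)
      {t : Set V | Ht.IsClique t ∧ s ⊆ t} (Set.toFinite _) ⟨s, hs, subset_rfl⟩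
    have hmc : IsMaxClique Ht t := by
      refine ⟨htc, fun t' ht' htt' => ?_⟩
      have hmem : t' ∈ {t : Set V | Ht.IsClique t ∧ s ⊆ t} := ⟨ht', hst.trans htt'⟩
      have hcard := htmax (j := t') hmem (Set.ncard_le_ncard htt' (Set.toFinite _))
      exact (Set.eq_of_subset_of_ncard_le htt' hcard (Set.toFinite _)).symm
    obtain ⟨k, hk⟩ := hsurj t hmc
    exact ⟨k, hk ▸ hst⟩
  refine ⟨hT, ?_, ?_⟩
  · apply Set.eq_univ_iff_forall.mpr
    intro x
    obtain ⟨k, hk⟩ := extend {x} (Set.pairwise_singleton x Ht.Adj)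
    exact Set.mem_iUnion.mpr ⟨k, hk rfl⟩
  · intro i j hij
    have hbridge : ¬ (T.deleteEdges {s(i, j)}).Reachable i j := by
      have hb := (SimpleGraph.isAcyclic_iff_forall_adj_isBridge.mp hT.2) hij
      exact SimpleGraph.isBridge_iff.mp hb
    have dich : ∀ {x k : κ} (_ : T.Walk x k),
        ((T.deleteEdges {s(i, j)}).Reachable i x ∨ (T.deleteEdges {s(i, j)}).Reachable j x) →
        ((T.deleteEdges {s(i, j)}).Reachable i k ∨ (T.deleteEdges {s(i, j)}).Reachable j k) := by
      intro x k w
      induction w with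
      | nil => exact id
      | @cons x' y' k' hadj w ih =>
        intro hx
        apply ih
        by_cases he : s(x', y') = s(i, j)
        · rw [Sym2.eq_iff] at he
          rcases he with ⟨rfl, rfl⟩ | ⟨rfl, rfl⟩
          · exact Or.inr (SimpleGraph.Reachable.refl _)
          · exact Or.inl (SimpleGraph.Reachable.refl _)
        · have hadj' : (T.deleteEdges {s(i, j)}).Adj x' y' := by
            rw [SimpleGraph.deleteEdges_adj]
            exact ⟨hadj, by simpa using he⟩
          rcases hx with h | h
          · exact Or.inl (h.trans hadj'.reachable)
          · exact Or.inr (h.trans hadj'.reachable)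
    have dich' : ∀ k : κ, (T.deleteEdges {s(i, j)}).Reachable i k ∨
        (T.deleteEdges {s(i, j)}).Reachable j k := by
      intro k
      obtain ⟨w⟩ := hT.1.preconnected i k
      exact dich w (Or.inl (SimpleGraph.Reachable.refl i))
    have opp : ∀ k k' : κ, (T.deleteEdges {s(i, j)}).Reachable i k →
        (T.deleteEdges {s(i, j)}).Reachable j k' → Cl k ∩ Cl k' ⊆ Cl i ∩ Cl j := by
      intro k k' hk hk'
      obtain ⟨w⟩ := hT.1.preconnected k k'
      by_cases he : s(i, j) ∈ (w.toPath : T.Walk k k').edges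
      · have hi := SimpleGraph.Walk.fst_mem_support_of_mem_edges _ he
        have hjj := SimpleGraph.Walk.snd_mem_support_of_mem_edges _ he
        intro x hx
        exact ⟨hjp k k' w.toPath.1 w.toPath.2 i hi hx, hjp k k' w.toPath.1 w.toPath.2 j hjj hx⟩
      · exfalso
        have hreach : (T.deleteEdges {s(i, j)}).Reachable k k' :=
          ⟨(w.toPath : T.Walk k k').toDeleteEdges {s(i, j)}
            (fun e hep hes => he ((Set.mem_singleton_iff.mp hes) ▸ hep))⟩
        exact hbridge (hk.trans (hreach.trans hk'.symm))
    intro u hu v hv p hnd hmc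
    obtain ⟨hu1, huS⟩ := hu
    obtain ⟨hv1, hvS⟩ := hv
    obtain ⟨k₁, hk₁, hu_in⟩ := Set.mem_iUnion₂.mp hu1
    obtain ⟨k₂, hk₂, hv_in⟩ := Set.mem_iUnion₂.mp hv1
    have hreach : (MVR.avoidGraph H (Cl i ∩ Cl j)).Reachable u v := by
      refine MVR.key_reach G C hpar H hH (Cl i ∩ Cl j) u p hvS ?_ false u
        (SimpleGraph.Reachable.refl u) huS (Or.inl rfl) (Or.inr huS)
      intro i' w h1 h2 hnc
      exact (hmc i' w h1 h2).2 hnc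
    obtain ⟨w⟩ := hreach
    have prop : ∀ {x y : V} (_ : (MVR.avoidGraph H (Cl i ∩ Cl j)).Walk x y),
        (∃ k, (T.deleteEdges {s(i, j)}).Reachable i k ∧ x ∈ Cl k) →
        (∃ k, (T.deleteEdges {s(i, j)}).Reachable i k ∧ y ∈ Cl k) := by
      intro x y w
      induction w with
      | nil => exact id
      | @cons x' y' z' hadj w ih =>
        intro hx
        obtain ⟨hHadj, hxS, hyS⟩ := MVR.avoidGraph_adj.mp hadj
        have hcl : Ht.IsClique {x', y'} :=
          SimpleGraph.isClique_pair.mpr (fun _ => hle hHadj)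
        obtain ⟨k0, hk0⟩ := extend {x', y'} hcl
        have hx0 : x' ∈ Cl k0 := hk0 (by simp)
        have hy0 : y' ∈ Cl k0 := hk0 (by simp)
        rcases dich' k0 with hside | hside
        · exact ih ⟨k0, hside, hy0⟩
        · exfalso
          obtain ⟨k, hk, hxk⟩ := hx
          exact hxS (opp k k0 hk hside ⟨hxk, hx0⟩)
    obtain ⟨k₃, hk₃, hv3⟩ := prop w ⟨k₁, hk₁, hu_in⟩
    exact hvS (opp k₃ k₂ hk₃ hk₂ ⟨hv3, hv_in⟩)
end

section
/- In an MVR chain graph G, distinct vertices u and v are collider connected if and only if there exists a chain component τ of G such that either (1) u, v ∈ τ, or (2) u ∈ τ and v ∈ pa_G(τ), or (3) v ∈ τ and u ∈ pa_G(τ), or (4) u, v ∈ pa_G(τ). -/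
namespace MVR
namespace MixedGraph

variable {V : Type} {G : MixedGraph V}

lemma support_length {a b : V} (p : G.Chain a b) :
    p.support.length = p.marks.length + 1 := by
  induction p <;> simp [Chain.support, Chain.marks, *]

/-- Chain built from a bidirected walk. -/
def Chain.ofBiWalk : ∀ {a b : V}, G.biGraph.Walk a b → G.Chain a b
  | _, _, SimpleGraph.Walk.nil => Chain.nil _
  | _, _, SimpleGraph.Walk.cons h p => Chain.bid h (Chain.ofBiWalk p)

lemma support_ofBiWalk : ∀ {a b : V} (p : G.biGraph.Walk a b),
    (Chain.ofBiWalk p).support = p.support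
  | _, _, SimpleGraph.Walk.nil => rfl
  | _, _, SimpleGraph.Walk.cons h p => by
      simp [Chain.ofBiWalk, Chain.support, support_ofBiWalk p]

lemma marks_ofBiWalk : ∀ {a b : V} (p : G.biGraph.Walk a b),
    ∀ m ∈ (Chain.ofBiWalk p).marks, m = ((true : Bool), (true : Bool))
  | _, _, SimpleGraph.Walk.nil => by simp [Chain.ofBiWalk, Chain.marks]
  | _, _, SimpleGraph.Walk.cons h p => by
      simp only [Chain.ofBiWalk, Chain.marks, List.mem_cons]
      rintro m (rfl | hm)
      · rfl
      · exact marks_ofBiWalk p m hm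

/-- Append a reversed directed edge `b ← c` at the end of a chain. -/
def Chain.concatRev : ∀ {a b c : V}, G.Chain a b → G.dir c b → G.Chain a c
  | _, _, c, Chain.nil a, h => Chain.rev h (Chain.nil c)
  | _, _, _, Chain.fwd h p, h' => Chain.fwd h (p.concatRev h')
  | _, _, _, Chain.rev h p, h' => Chain.rev h (p.concatRev h')
  | _, _, _, Chain.bid h p, h' => Chain.bid h (p.concatRev h')

lemma support_concatRev : ∀ {a b c : V} (p : G.Chain a b) (h : G.dir c b),
    (p.concatRev h).support = p.support ++ [c]
  | _, _, _, Chain.nil a, h => rfl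
  | _, _, _, Chain.fwd h p, h' => by
      simp [Chain.concatRev, Chain.support, support_concatRev p h']
  | _, _, _, Chain.rev h p, h' => by
      simp [Chain.concatRev, Chain.support, support_concatRev p h']
  | _, _, _, Chain.bid h p, h' => by
      simp [Chain.concatRev, Chain.support, support_concatRev p h']

lemma marks_concatRev : ∀ {a b c : V} (p : G.Chain a b) (h : G.dir c b),
    (p.concatRev h).marks = p.marks ++ [((true : Bool), (false : Bool))]
  | _, _, _, Chain.nil a, h => rfl
  | _, _, _, Chain.fwd h p, h' => by
      simp [Chain.concatRev, Chain.marks, marks_concatRev p h']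
  | _, _, _, Chain.rev h p, h' => by
      simp [Chain.concatRev, Chain.marks, marks_concatRev p h']
  | _, _, _, Chain.bid h p, h' => by
      simp [Chain.concatRev, Chain.marks, marks_concatRev p h']

/-- Mark-list condition guaranteeing every internal vertex is a collider. -/
def Pcond (l : List (Bool × Bool)) : Prop :=
  ∀ i m, l[i]? = some m → (i + 1 < l.length → m.2 = true) ∧ (0 < i → m.1 = true)

lemma pcond_allbid {l : List (Bool × Bool)}
    (hl : ∀ m ∈ l, m = ((true : Bool), (true : Bool))) : Pcond l := by
  intro i m hm
  have := hl m (List.mem_of_getElem? hm)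
  subst this
  exact ⟨fun _ => rfl, fun _ => rfl⟩

lemma pcond_append_last {l : List (Bool × Bool)}
    (hl : ∀ m ∈ l, m = ((true : Bool), (true : Bool))) :
    Pcond (l ++ [((true : Bool), (false : Bool))]) := by
  intro i m hm
  have hlen : i < l.length + 1 := by
    have := (List.getElem?_eq_some_iff.mp hm).1
    simpa using this
  rcases Nat.lt_or_ge i l.length with hi | hi
  · rw [List.getElem?_append_left hi] at hm
    have := hl m (List.mem_of_getElem? hm)
    subst this
    exact ⟨fun _ => rfl, fun _ => rfl⟩
  · have hieq : i = l.length := by omega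
    subst hieq
    have : m = ((true : Bool), (false : Bool)) := by
      rw [List.getElem?_append_right (le_refl _)] at hm
      simpa using hm.symm
    subst this
    constructor
    · intro hlt
      simp at hlt
    · intro _; rfl

lemma pcond_cons_first {l : List (Bool × Bool)} (hl : Pcond l)
    (h1 : ∀ m ∈ l, m.1 = true) :
    Pcond (((false : Bool), (true : Bool)) :: l) := by
  intro i m hm
  cases i with
  | zero =>
      simp only [List.getElem?_cons_zero, Option.some.injEq] at hm
      subst hm
      exact ⟨fun _ => rfl, fun h => absurd h (by omega)⟩
  | succ j =>
      rw [List.getElem?_cons_succ] at hm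
      constructor
      · intro hlt
        exact (hl j m hm).1 (by simpa using hlt)
      · intro _
        exact h1 m (List.mem_of_getElem? hm)

lemma colliders_of_pcond {a b : V} (p : G.Chain a b) (h : Pcond p.marks) :
    ∀ i : ℕ, i + 2 < p.support.length → p.ColliderAt i := by
  intro i hi
  rw [support_length] at hi
  have hi1 : i + 1 < p.marks.length := by omega
  have hi0 : i < p.marks.length := by omega
  refine ⟨p.marks[i], p.marks[i+1], (List.getElem?_eq_getElem hi0),
    (List.getElem?_eq_getElem hi1), ?_, ?_⟩
  · exact (h i _ (List.getElem?_eq_getElem hi0)).1 hi1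
  · exact (h (i+1) _ (List.getElem?_eq_getElem hi1)).2 (by omega)

lemma reach_of_mem_support {W : Type} {H : SimpleGraph W} {a b x : W}
    (p : H.Walk a b) (hx : x ∈ p.support) : H.Reachable a x := by
  classical
  exact ⟨p.takeUntil x hx⟩

/-- Key structural lemma: a chain in which every edge has an arrowhead at its left
endpoint and every non-last edge has an arrowhead at its right endpoint consists of
bidirected edges, possibly followed by a final reversed directed edge. -/
lemma reach_of_headed : ∀ {a b : V} (p : G.Chain a b),
    (∀ i m, p.marks[i]? = some m → m.1 = true ∧
        (i + 1 < p.marks.length → m.2 = true)) →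
    ∃ w, G.biGraph.Reachable a w ∧ (w = b ∨ G.dir b w) := by
  intro a b p
  induction p with
  | nil a => exact fun _ => ⟨a, SimpleGraph.Reachable.refl a, Or.inl rfl⟩
  | fwd h q ih =>
      intro hp
      have := (hp 0 ((false : Bool), (true : Bool)) (by simp [Chain.marks])).1
      simp at this
  | rev h q ih =>
      intro hp
      cases q with
      | nil c =>
          exact ⟨_, SimpleGraph.Reachable.refl _, Or.inr h⟩
      | fwd h' q' =>
          have := (hp 0 ((true : Bool), (false : Bool)) (by simp [Chain.marks])).2
            (by simp [Chain.marks])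
          simp at this
      | rev h' q' =>
          have := (hp 0 ((true : Bool), (false : Bool)) (by simp [Chain.marks])).2
            (by simp [Chain.marks])
          simp at this
      | bid h' q' =>
          have := (hp 0 ((true : Bool), (false : Bool)) (by simp [Chain.marks])).2
            (by simp [Chain.marks])
          simp at this
  | bid h q ih =>
      intro hp
      obtain ⟨w, hr, ho⟩ := ih (fun i m hm => by
        have := hp (i + 1) m (by simpa [Chain.marks] using hm)
        exact ⟨this.1, fun hlt => this.2 (by simp [Chain.marks]; omega)⟩)
      exact ⟨w, (SimpleGraph.Adj.reachable (show G.biGraph.Adj _ _ from h)).trans hr, ho⟩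

/-- Extract the headed-condition for the tail of a collider chain. -/
lemma tail_headed {a b c : V} {m0 : Bool × Bool} {p : G.Chain a c} {q : G.Chain b c}
    (hm : p.marks = m0 :: q.marks)
    (hcol : ∀ i : ℕ, i + 2 < p.support.length → p.ColliderAt i) :
    ∀ i m, q.marks[i]? = some m → m.1 = true ∧
      (i + 1 < q.marks.length → m.2 = true) := by
  intro i m hqm
  have hi : i < q.marks.length := (List.getElem?_eq_some_iff.mp hqm).1
  have hlen : p.support.length = q.marks.length + 2 := by
    rw [support_length, hm]; simp
  obtain ⟨m₁, m₂, h₁, h₂, e₁, e₂⟩ := hcol i (by omega)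
  rw [hm, List.getElem?_cons_succ, hqm] at h₂
  have hm2 : m₂ = m := by simpa using h₂.symm
  refine ⟨hm2 ▸ e₂, fun hlt => ?_⟩
  obtain ⟨m₁', m₂', h₁', h₂', e₁', e₂'⟩ := hcol (i + 1) (by omega)
  rw [hm, List.getElem?_cons_succ, hqm] at h₁'
  have h3 : m₁' = m := by simpa using h₁'.symm
  exact h3 ▸ e₁'

end MixedGraph
end MVR
/-- In an MVR chain graph, distinct vertices `u` and `v` are collider
connected iff there is a chain component `τ` with (1) `u, v ∈ τ`, or (2) `u ∈ τ` and
`v ∈ pa_G(τ)`, or (3) `v ∈ τ` and `u ∈ pa_G(τ)`, or (4) `u, v ∈ pa_G(τ)`. -/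
theorem MVR.colliderConnected_iff_chainComponent
    {V : Type} (G : MVR.MixedGraph V) (hG : G.IsMVRChainGraph)
    (u v : V) (huv : u ≠ v) :
    G.ColliderConnected u v ↔
      ∃ τ : Set V, G.IsChainComponent τ ∧
        ((u ∈ τ ∧ v ∈ τ) ∨ (u ∈ τ ∧ v ∈ G.paSet τ) ∨ (v ∈ τ ∧ u ∈ G.paSet τ) ∨
          (u ∈ G.paSet τ ∧ v ∈ G.paSet τ)) := by
  classical
  constructor
  · rintro ⟨p, hnd, hcol⟩
    cases p with
    | nil a => exact absurd rfl huv
    | @fwd _ w₀ _ h q =>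
        obtain ⟨w₂, hr, ho⟩ := MixedGraph.reach_of_headed q
          (MixedGraph.tail_headed (p := MixedGraph.Chain.fwd h q) rfl hcol)
        refine ⟨{x | G.biGraph.Reachable w₀ x}, ⟨w₀, rfl⟩, ?_⟩
        have hu' : u ∈ {x | G.biGraph.Reachable w₀ x} ∨
            u ∈ G.paSet {x | G.biGraph.Reachable w₀ x} := by
          by_cases hu : G.biGraph.Reachable w₀ u
          · exact Or.inl hu
          · exact Or.inr ⟨hu, w₀, SimpleGraph.Reachable.refl w₀, h⟩
        have hv' : v ∈ {x | G.biGraph.Reachable w₀ x} ∨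
            v ∈ G.paSet {x | G.biGraph.Reachable w₀ x} := by
          rcases ho with rfl | hd
          · exact Or.inl hr
          · by_cases hv : G.biGraph.Reachable w₀ v
            · exact Or.inl hv
            · exact Or.inr ⟨hv, w₂, hr, hd⟩
        rcases hu' with hu' | hu' <;> rcases hv' with hv' | hv'
        · exact Or.inl ⟨hu', hv'⟩
        · exact Or.inr (Or.inl ⟨hu', hv'⟩)
        · exact Or.inr (Or.inr (Or.inl ⟨hv', hu'⟩))
        · exact Or.inr (Or.inr (Or.inr ⟨hu', hv'⟩))
    | @rev _ w₀ _ h q =>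
        -- the first edge is `u ← w₀`; the rest of the chain must be empty
        cases q with
        | nil c =>
            refine ⟨{x | G.biGraph.Reachable u x}, ⟨u, rfl⟩, ?_⟩
            by_cases hv : G.biGraph.Reachable u v
            · exact Or.inl ⟨SimpleGraph.Reachable.refl u, hv⟩
            · exact Or.inr (Or.inl ⟨SimpleGraph.Reachable.refl u,
                hv, u, SimpleGraph.Reachable.refl u, h⟩)
        | fwd h' q' =>
            obtain ⟨m₁, m₂, h₁, h₂, e₁, e₂⟩ := hcol 0 (by
              rw [MixedGraph.support_length]; simp [MixedGraph.Chain.marks])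
            simp [MixedGraph.Chain.marks] at h₁
            rw [← h₁] at e₁
            simp at e₁
        | rev h' q' =>
            obtain ⟨m₁, m₂, h₁, h₂, e₁, e₂⟩ := hcol 0 (by
              rw [MixedGraph.support_length]; simp [MixedGraph.Chain.marks])
            simp [MixedGraph.Chain.marks] at h₁
            rw [← h₁] at e₁
            simp at e₁
        | bid h' q' =>
            obtain ⟨m₁, m₂, h₁, h₂, e₁, e₂⟩ := hcol 0 (by
              rw [MixedGraph.support_length]; simp [MixedGraph.Chain.marks])
            simp [MixedGraph.Chain.marks] at h₁
            rw [← h₁] at e₁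
            simp at e₁
    | @bid _ w₀ _ h q =>
        obtain ⟨w₂, hr, ho⟩ := MixedGraph.reach_of_headed q
          (MixedGraph.tail_headed (p := MixedGraph.Chain.bid h q) rfl hcol)
        refine ⟨{x | G.biGraph.Reachable w₀ x}, ⟨w₀, rfl⟩, ?_⟩
        have hu' : u ∈ {x | G.biGraph.Reachable w₀ x} :=
          (SimpleGraph.Adj.reachable (show G.biGraph.Adj u w₀ from h)).symm
        have hv' : v ∈ {x | G.biGraph.Reachable w₀ x} ∨
            v ∈ G.paSet {x | G.biGraph.Reachable w₀ x} := by
          rcases ho with rfl | hd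
          · exact Or.inl hr
          · by_cases hv : G.biGraph.Reachable w₀ v
            · exact Or.inl hv
            · exact Or.inr ⟨hv, w₂, hr, hd⟩
        rcases hv' with hv' | hv'
        · exact Or.inl ⟨hu', hv'⟩
        · exact Or.inr (Or.inl ⟨hu', hv'⟩)
  · rintro ⟨τ, ⟨a, rfl⟩, hcase⟩
    rcases hcase with ⟨hu, hv⟩ | ⟨hu, hvn, w, hw, hdv⟩ | ⟨hv, hun, w, hw, hdu⟩ |
      ⟨⟨hun, w₁, hw₁, hdu⟩, ⟨hvn, w₂, hw₂, hdv⟩⟩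
    · -- u, v ∈ τ : bidirected path
      obtain ⟨W⟩ := (hu : G.biGraph.Reachable a u).symm.trans hv
      let P := W.toPath
      refine ⟨MixedGraph.Chain.ofBiWalk P.1, ?_, ?_⟩
      · rw [MixedGraph.support_ofBiWalk]; exact P.2.support_nodup
      · exact MixedGraph.colliders_of_pcond _
          (MixedGraph.pcond_allbid (MixedGraph.marks_ofBiWalk P.1))
    · -- u ∈ τ, v ∈ pa(τ): u ↔ … ↔ w ← v
      obtain ⟨W⟩ := (hu : G.biGraph.Reachable a u).symm.trans hw
      let P := W.toPath
      refine ⟨(MixedGraph.Chain.ofBiWalk P.1).concatRev hdv, ?_, ?_⟩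
      · rw [MixedGraph.support_concatRev, MixedGraph.support_ofBiWalk]
        rw [List.nodup_append]
        refine ⟨P.2.support_nodup, List.nodup_singleton v, ?_⟩
        intro x hx y hxv hxy
        rw [List.mem_singleton] at hxv
        subst hxv
        subst hxy
        exact hvn (hu.trans (MixedGraph.reach_of_mem_support P.1 hx))
      · refine MixedGraph.colliders_of_pcond _ ?_
        rw [MixedGraph.marks_concatRev]
        exact MixedGraph.pcond_append_last (MixedGraph.marks_ofBiWalk P.1)
    · -- v ∈ τ, u ∈ pa(τ): u → w ↔ … ↔ v
      obtain ⟨W⟩ := (hw : G.biGraph.Reachable a w).symm.trans hv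
      let P := W.toPath
      refine ⟨MixedGraph.Chain.fwd hdu (MixedGraph.Chain.ofBiWalk P.1), ?_, ?_⟩
      · show (u :: (MixedGraph.Chain.ofBiWalk P.1).support).Nodup
        rw [MixedGraph.support_ofBiWalk, List.nodup_cons]
        refine ⟨fun hx => ?_, P.2.support_nodup⟩
        exact hun (hw.trans (MixedGraph.reach_of_mem_support P.1 hx))
      · refine MixedGraph.colliders_of_pcond _ ?_
        show MixedGraph.Pcond (((false : Bool), (true : Bool)) ::
          (MixedGraph.Chain.ofBiWalk P.1).marks)
        refine MixedGraph.pcond_cons_first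
          (MixedGraph.pcond_allbid (MixedGraph.marks_ofBiWalk P.1)) ?_
        intro m hm
        rw [MixedGraph.marks_ofBiWalk P.1 m hm]
    · -- u, v ∈ pa(τ): u → w₁ ↔ … ↔ w₂ ← v
      obtain ⟨W⟩ := (hw₁ : G.biGraph.Reachable a w₁).symm.trans hw₂
      let P := W.toPath
      refine ⟨MixedGraph.Chain.fwd hdu
        ((MixedGraph.Chain.ofBiWalk P.1).concatRev hdv), ?_, ?_⟩
      · show (u :: ((MixedGraph.Chain.ofBiWalk P.1).concatRev hdv).support).Nodup
        rw [MixedGraph.support_concatRev, MixedGraph.support_ofBiWalk,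
          List.nodup_cons, List.nodup_append]
        refine ⟨?_, P.2.support_nodup, List.nodup_singleton v, ?_⟩
        · intro hx
          rw [List.mem_append] at hx
          rcases hx with hx | hx
          · exact hun (hw₁.trans (MixedGraph.reach_of_mem_support P.1 hx))
          · rw [List.mem_singleton] at hx
            exact huv hx
        · intro x hx y hxv hxy
          rw [List.mem_singleton] at hxv
          subst hxv
          subst hxy
          exact hvn (hw₁.trans (MixedGraph.reach_of_mem_support P.1 hx))
      · refine MixedGraph.colliders_of_pcond _ ?_
        show MixedGraph.Pcond (((false : Bool), (true : Bool)) ::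
          ((MixedGraph.Chain.ofBiWalk P.1).concatRev hdv).marks)
        rw [MixedGraph.marks_concatRev]
        refine MixedGraph.pcond_cons_first
          (MixedGraph.pcond_append_last (MixedGraph.marks_ofBiWalk P.1)) ?_
        intro m hm
        rw [List.mem_append] at hm
        rcases hm with hm | hm
        · rw [MixedGraph.marks_ofBiWalk P.1 m hm]
        · rw [List.mem_singleton] at hm; subst hm; rfl
end
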